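/- Let S : R^d → R be bounded, continuous, nonnegative, with S(k) ~ t|k|^α as |k| → 0 for some t > 0 and α ≥ 0, and suppose sup_k S(k)|k|^{-α} < ∞. Let f_1 ∈ S(R^d) with ∫|F[f_1](k)||k|^α dk < ∞ and f_2 ∈ L¹(R^d). Then for any 0 < j_1 ≤ j_2 < 1, δ³_R := ∫_{R^d} F[f_1](k) conj(F[f_2])(R^{j_2-j_1}k) (R^{α j_1} S(k/R^{j_1}) - t|k|^α) dk converges to 0 as R → ∞. -/

import Mathlib

open MeasureTheory Filter ComplexConjugate

/-- The Fourier transform on `ℝ^d` with the convention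
`F[f](k) = (2π)^{-d/2} ∫ f(x) e^{i k·x} dx`. -/
noncomputable def fourierT (d : ℕ) (f : EuclideanSpace ℝ (Fin d) → ℂ)
    (k : EuclideanSpace ℝ (Fin d)) : ℂ :=
  ((2 * Real.pi) ^ (-(d : ℝ) / 2) : ℝ) *
    ∫ x : EuclideanSpace ℝ (Fin d), Complex.exp (Complex.I * (inner ℝ x k : ℝ)) * f x

lemma norm_exp_inner {d : ℕ} (x k : EuclideanSpace ℝ (Fin d)) :
    ‖Complex.exp (Complex.I * (inner ℝ x k : ℝ))‖ = 1 := by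
  rw [Complex.norm_exp]
  simp

lemma fourierT_cont {d : ℕ} {f : EuclideanSpace ℝ (Fin d) → ℂ} (hf : Integrable f) :
    Continuous (fourierT d f) := by
  apply Continuous.mul continuous_const
  apply MeasureTheory.continuous_of_dominated (bound := fun x => ‖f x‖)
  · intro k
    exact ((Complex.continuous_exp.comp (continuous_const.mul
      (Complex.continuous_ofReal.comp ((continuous_id.inner continuous_const))) :
      Continuous fun x : EuclideanSpace ℝ (Fin d) =>
        Complex.I * (inner ℝ x k : ℝ))).aestronglyMeasurable).mul hf.1
  · intro k
    filter_upwards with x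
    rw [norm_mul, norm_exp_inner, one_mul]
  · exact hf.norm
  · filter_upwards with x
    exact (Complex.continuous_exp.comp (continuous_const.mul
      (Complex.continuous_ofReal.comp ((continuous_const.inner continuous_id))) :
      Continuous fun k : EuclideanSpace ℝ (Fin d) =>
        Complex.I * (inner ℝ x k : ℝ))).mul continuous_const

lemma fourierT_bound {d : ℕ} {f : EuclideanSpace ℝ (Fin d) → ℂ}
    (k : EuclideanSpace ℝ (Fin d)) :
    ‖fourierT d f k‖ ≤ ((2 * Real.pi) ^ (-(d : ℝ) / 2) : ℝ) * ∫ x, ‖f x‖ := by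
  rw [fourierT, norm_mul, Complex.norm_real, Real.norm_eq_abs,
    abs_of_pos (Real.rpow_pos_of_pos (by positivity) _)]
  gcongr
  calc ‖∫ x : EuclideanSpace ℝ (Fin d), Complex.exp (Complex.I * (inner ℝ x k : ℝ)) * f x‖
      ≤ ∫ x, ‖Complex.exp (Complex.I * (inner ℝ x k : ℝ)) * f x‖ := norm_integral_le_integral_norm _
    _ = ∫ x, ‖f x‖ := by
        congr 1; funext x; rw [norm_mul, norm_exp_inner, one_mul]

/-- under `S(k) ~ t|k|^α` at the origin and `sup_k S(k)|k|^{-α} < ∞`,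
the remainder
`δ³_R = ∫ F[f₁](k) conj(F[f₂])(R^{j₂-j₁}k) (R^{αj₁} S(k/R^{j₁}) - t|k|^α) dk`
tends to `0` as `R → ∞`. -/
theorem delta3_tendsto_zero
    (d : ℕ) (hd : 1 ≤ d)
    (S : EuclideanSpace ℝ (Fin d) → ℝ)
    (hSbdd : ∃ M : ℝ, ∀ k, S k ≤ M) (hScont : Continuous S) (hSnonneg : ∀ k, 0 ≤ S k)
    (t α : ℝ) (ht : 0 < t) (hα : 0 ≤ α)
    (hS0 : Tendsto (fun k : EuclideanSpace ℝ (Fin d) => S k / (t * ‖k‖ ^ α))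
      (nhdsWithin 0 {0}ᶜ) (nhds 1))
    (hSsup : ∃ C : ℝ, ∀ k : EuclideanSpace ℝ (Fin d), k ≠ 0 → S k ≤ C * ‖k‖ ^ α)
    (f₁ : SchwartzMap (EuclideanSpace ℝ (Fin d)) ℂ)
    (hint : Integrable (fun k : EuclideanSpace ℝ (Fin d) => ‖fourierT d (⇑f₁) k‖ * ‖k‖ ^ α))
    (f₂ : EuclideanSpace ℝ (Fin d) → ℂ) (hf₂ : Integrable f₂)
    (j₁ j₂ : ℝ) (hj₁ : 0 < j₁) (hj : j₁ ≤ j₂) (hj₂ : j₂ < 1) :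
    Tendsto (fun R : ℝ =>
      ∫ k : EuclideanSpace ℝ (Fin d),
        fourierT d (⇑f₁) k * conj (fourierT d f₂ ((R ^ (j₂ - j₁) : ℝ) • k)) *
          (((R ^ (α * j₁) : ℝ) * S ((R ^ (-j₁) : ℝ) • k) - t * ‖k‖ ^ α : ℝ) : ℂ))
      atTop (nhds 0) := by
  haveI : NeZero d := ⟨by omega⟩
  obtain ⟨C, hC⟩ := hSsup
  set C' : ℝ := max C 0 with hC'def
  have hC'0 : 0 ≤ C' := le_max_right _ _
  have hC' : ∀ k : EuclideanSpace ℝ (Fin d), k ≠ 0 → S k ≤ C' * ‖k‖ ^ α := fun k hk =>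
    (hC k hk).trans (mul_le_mul_of_nonneg_right (le_max_left C 0) (by positivity))
  set Bd : ℝ := ((2 * Real.pi) ^ (-(d : ℝ) / 2) : ℝ) * ∫ x, ‖f₂ x‖ with hBddef
  have hBd : ∀ w : EuclideanSpace ℝ (Fin d), ‖fourierT d f₂ w‖ ≤ Bd := fun w => fourierT_bound w
  have hBd0 : 0 ≤ Bd :=
    le_trans (norm_nonneg (fourierT d f₂ 0)) (hBd 0)
  have hae : ∀ᵐ k : EuclideanSpace ℝ (Fin d), k ≠ 0 :=
    ae_iff.2 (by simpa using measure_singleton (0 : EuclideanSpace ℝ (Fin d)))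
  -- norm of scaled vector
  have hnorm : ∀ (R : ℝ), 0 < R → ∀ k : EuclideanSpace ℝ (Fin d),
      ‖(R ^ (-j₁) : ℝ) • k‖ ^ α = R ^ (-j₁ * α) * ‖k‖ ^ α := by
    intro R hR k
    rw [norm_smul, Real.norm_eq_abs, abs_of_pos (Real.rpow_pos_of_pos hR _),
      Real.mul_rpow (Real.rpow_pos_of_pos hR _).le (norm_nonneg k),
      ← Real.rpow_mul hR.le]
  have hmul : ∀ R : ℝ, 0 < R → R ^ (α * j₁) * R ^ (-j₁ * α) = 1 := by
    intro R hR
    rw [← Real.rpow_add hR, show α * j₁ + -j₁ * α = 0 by ring, Real.rpow_zero]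
  -- key domination for the scalar factor
  have key : ∀ R : ℝ, 0 < R → ∀ k : EuclideanSpace ℝ (Fin d), k ≠ 0 →
      R ^ (α * j₁) * S ((R ^ (-j₁) : ℝ) • k) ≤ C' * ‖k‖ ^ α := by
    intro R hR k hk
    have hu0 : ((R ^ (-j₁) : ℝ) • k) ≠ 0 :=
      smul_ne_zero (Real.rpow_pos_of_pos hR _).ne' hk
    have h1 : S ((R ^ (-j₁) : ℝ) • k) ≤ C' * (R ^ (-j₁ * α) * ‖k‖ ^ α) := by
      rw [← hnorm R hR k]; exact hC' _ hu0
    calc R ^ (α * j₁) * S ((R ^ (-j₁) : ℝ) • k)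
        ≤ R ^ (α * j₁) * (C' * (R ^ (-j₁ * α) * ‖k‖ ^ α)) := by
          exact mul_le_mul_of_nonneg_left h1 (Real.rpow_pos_of_pos hR _).le
      _ = (R ^ (α * j₁) * R ^ (-j₁ * α)) * (C' * ‖k‖ ^ α) := by ring
      _ = C' * ‖k‖ ^ α := by rw [hmul R hR, one_mul]
  -- pointwise limit of the scalar factor
  have hlim : ∀ k : EuclideanSpace ℝ (Fin d), k ≠ 0 →
      Tendsto (fun R : ℝ => (R ^ (α * j₁) : ℝ) * S ((R ^ (-j₁) : ℝ) • k) - t * ‖k‖ ^ α)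
        atTop (nhds 0) := by
    intro k hk
    have hK : (0 : ℝ) < ‖k‖ ^ α := Real.rpow_pos_of_pos (norm_pos_iff.2 hk) α
    have hu : Tendsto (fun R : ℝ => (R ^ (-j₁) : ℝ) • k) atTop (nhdsWithin 0 {0}ᶜ) := by
      rw [tendsto_nhdsWithin_iff]
      constructor
      · simpa using (tendsto_rpow_neg_atTop hj₁).smul_const k
      · filter_upwards [eventually_gt_atTop (0 : ℝ)] with R hR
        exact smul_ne_zero (Real.rpow_pos_of_pos hR _).ne' hk
    have h1 := hS0.comp hu
    have h2' := h1.mul_const (t * ‖k‖ ^ α)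
    rw [one_mul] at h2'
    have h2 : Tendsto (fun R : ℝ =>
        S ((R ^ (-j₁) : ℝ) • k) / (t * ‖(R ^ (-j₁) : ℝ) • k‖ ^ α) * (t * ‖k‖ ^ α))
        atTop (nhds (t * ‖k‖ ^ α)) := h2'
    have h3 : Tendsto (fun R : ℝ => (R ^ (α * j₁) : ℝ) * S ((R ^ (-j₁) : ℝ) • k))
        atTop (nhds (t * ‖k‖ ^ α)) := by
      apply h2.congr'
      filter_upwards [eventually_gt_atTop (0 : ℝ)] with R hR
      have hA : (0 : ℝ) < R ^ (-j₁ * α) := Real.rpow_pos_of_pos hR _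
      have hB : R ^ (α * j₁) = (R ^ (-j₁ * α))⁻¹ := eq_inv_of_mul_eq_one_left (hmul R hR)
      rw [hnorm R hR k, hB]
      field_simp
    simpa using h3.sub_const (t * ‖k‖ ^ α)
  -- dominated convergence
  have main := tendsto_integral_filter_of_dominated_convergence
    (μ := (volume : Measure (EuclideanSpace ℝ (Fin d)))) (l := atTop)
    (F := fun R : ℝ => fun k : EuclideanSpace ℝ (Fin d) =>
      fourierT d (⇑f₁) k * conj (fourierT d f₂ ((R ^ (j₂ - j₁) : ℝ) • k)) *
        (((R ^ (α * j₁) : ℝ) * S ((R ^ (-j₁) : ℝ) • k) - t * ‖k‖ ^ α : ℝ) : ℂ))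
    (f := fun _ : EuclideanSpace ℝ (Fin d) => (0 : ℂ))
    (bound := fun k : EuclideanSpace ℝ (Fin d) => ‖fourierT d (⇑f₁) k‖ * (Bd * ((C' + t) * ‖k‖ ^ α)))
    (by -- measurability
      filter_upwards with R
      have hc1 : Continuous (fourierT d (⇑f₁)) := fourierT_cont f₁.integrable
      have hc2 : Continuous fun k : EuclideanSpace ℝ (Fin d) => conj (fourierT d f₂ ((R ^ (j₂ - j₁) : ℝ) • k)) :=
        continuous_star.comp' ((fourierT_cont hf₂).comp' (continuous_const_smul _))
      have hc3 : Continuous fun k : EuclideanSpace ℝ (Fin d) =>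
          (((R ^ (α * j₁) : ℝ) * S ((R ^ (-j₁) : ℝ) • k) - t * ‖k‖ ^ α : ℝ) : ℂ) :=
        Complex.continuous_ofReal.comp'
          (((continuous_const.mul (hScont.comp' (continuous_const_smul _))).sub
            (continuous_const.mul (continuous_norm.rpow_const (fun _ => Or.inr hα)))))
      exact ((hc1.mul hc2).mul hc3).aestronglyMeasurable)
    (by -- bound
      filter_upwards [eventually_gt_atTop (0 : ℝ)] with R hR
      filter_upwards [hae] with k hk
      have hK : (0 : ℝ) ≤ ‖k‖ ^ α := by positivity
      have habs : |(R ^ (α * j₁) : ℝ) * S ((R ^ (-j₁) : ℝ) • k) - t * ‖k‖ ^ α|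
          ≤ (C' + t) * ‖k‖ ^ α := by
        have h1 := key R hR k hk
        have h2 : (0 : ℝ) ≤ R ^ (α * j₁) * S ((R ^ (-j₁) : ℝ) • k) :=
          mul_nonneg (Real.rpow_pos_of_pos hR _).le (hSnonneg _)
        have h3 : (0 : ℝ) ≤ t * ‖k‖ ^ α := mul_nonneg ht.le hK
        have h4 : (0 : ℝ) ≤ C' * ‖k‖ ^ α := mul_nonneg hC'0 hK
        rw [abs_le]
        constructor <;> nlinarith
      rw [norm_mul, norm_mul, RCLike.norm_conj, Complex.norm_real, Real.norm_eq_abs,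
        mul_assoc]
      gcongr
      · exact hBd _)
    (by -- integrable bound
      apply (hint.const_mul (Bd * (C' + t))).congr
      filter_upwards with k
      ring)
    (by -- pointwise limit
      filter_upwards [hae] with k hk
      apply squeeze_zero_norm
        (a := fun R : ℝ => ‖fourierT d (⇑f₁) k‖ * Bd *
          |(R ^ (α * j₁) : ℝ) * S ((R ^ (-j₁) : ℝ) • k) - t * ‖k‖ ^ α|)
      · intro R
        rw [norm_mul, norm_mul, RCLike.norm_conj, Complex.norm_real, Real.norm_eq_abs]
        gcongr
        exact hBd _
      · have := ((hlim k hk).abs).const_mul (‖fourierT d (⇑f₁) k‖ * Bd)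
        simpa using this)
  simpa using main
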